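/- arXiv:1809.02908 — 2 statements merged into one kernel-verified Lean document; each statement's English description precedes it below -/
import Mathlib

section
/- In a tensor product B_L ⊗ ⋯ ⊗ B₁ of seminormal abstract crystals, the reduced signature obtained from the word (−^{φ_i(b_L)} +^{ε_i(b_L)} ⋯ −^{φ_i(b₁)} +^{ε_i(b₁)}) by successively deleting consecutive +− pairs is independent of the order in which such deletions are performed, and has the form −^a +^b with a = φ_i(b) and b = ε_i(b), where b = b_L ⊗ ⋯ ⊗ b₁. -/
/-- One deletion step: remove an adjacent `+−` pair (here `true` = `+`, `false` = `−`). -/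
inductive DelStep : List Bool → List Bool → Prop
  | step (l r : List Bool) : DelStep (l ++ [true, false] ++ r) (l ++ r)

/-- Combine the pairs `(φ₂, ε₂)` (left factor) and `(φ₁, ε₁)` (right factor) by the tensor
product rule, using `⟨α_i^∨, wt b⟩ = φ_i(b) − ε_i(b)`:
`φ(b₂ ⊗ b₁) = max(φ₂, φ₁ + φ₂ − ε₂)` and `ε(b₂ ⊗ b₁) = max(ε₁, ε₂ − (φ₁ − ε₁))`. -/
def combineStats (p q : ℤ × ℤ) : ℤ × ℤ :=
  (max p.1 (q.1 + p.1 - p.2), max q.2 (p.2 - q.1 + q.2))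

/-- The pair `(φ_i(b), ε_i(b))` of the tensor product `b = b_L ⊗ ⋯ ⊗ b₁`, computed recursively
from the list `[(φ_i(b_L), ε_i(b_L)), …, (φ_i(b₁), ε_i(b₁))]`. -/
def sigStats : List (ℤ × ℤ) → ℤ × ℤ
  | [] => (0, 0)
  | p :: rest => combineStats p (sigStats rest)

/-- The word `−^{φ_i(b_L)} +^{ε_i(b_L)} ⋯ −^{φ_i(b₁)} +^{ε_i(b₁)}` (with `false` = `−`). -/
def sigWord : List (ℤ × ℤ) → List Bool
  | [] => []
  | p :: rest => List.replicate p.1.toNat false ++ List.replicate p.2.toNat true ++ sigWord rest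

def sigStep : ℕ × ℕ → Bool → ℕ × ℕ
  | (a, b), true => (a, b + 1)
  | (a, b), false => if b = 0 then (a + 1, 0) else (a, b - 1)

lemma fold_false (a : ℕ) : ∀ c d : ℕ,
    (List.replicate a false).foldl sigStep (c, d) = (c + (a - d), d - a) := by
  induction a with
  | zero => intro c d; simp
  | succ n ih =>
    intro c d
    rw [List.replicate_succ, List.foldl_cons]
    rcases Nat.eq_zero_or_pos d with h | h
    · subst h; simp [sigStep, ih]; omega
    · have hd : d ≠ 0 := by omega
      have : sigStep (c, d) false = (c, d - 1) := by simp [sigStep, hd]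
      rw [this, ih]
      simp only [Prod.mk.injEq]
      constructor <;> omega

lemma fold_true (b : ℕ) : ∀ c d : ℕ,
    (List.replicate b true).foldl sigStep (c, d) = (c, d + b) := by
  induction b with
  | zero => intro c d; simp
  | succ n ih =>
    intro c d
    rw [List.replicate_succ, List.foldl_cons]
    show (List.replicate n true).foldl sigStep (c, d + 1) = _
    rw [ih]; congr 1; omega

lemma delstep_foldl {w v : List Bool} (h : DelStep w v) (s : ℕ × ℕ) :
    w.foldl sigStep s = v.foldl sigStep s := by
  obtain ⟨l, r⟩ := h
  have key : ∀ t : ℕ × ℕ, List.foldl sigStep t [true, false] = t := by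
    rintro ⟨a, b⟩; simp [sigStep]
  simp only [List.foldl_append, key]

lemma rtg_foldl {w v : List Bool} (h : Relation.ReflTransGen DelStep w v) (s : ℕ × ℕ) :
    w.foldl sigStep s = v.foldl sigStep s := by
  induction h with
  | refl => rfl
  | tail _ hstep ih => rw [ih, delstep_foldl hstep]

lemma sigStats_nonneg (L : List (ℤ × ℤ)) (hL : ∀ p ∈ L, 0 ≤ p.1 ∧ 0 ≤ p.2) :
    0 ≤ (sigStats L).1 ∧ 0 ≤ (sigStats L).2 := by
  induction L with
  | nil => simp [sigStats]
  | cons p rest ih =>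
    have hp := hL p (by simp)
    have := ih (fun q hq => hL q (by simp [hq]))
    simp only [sigStats, combineStats]
    constructor
    · exact le_trans hp.1 (le_max_left _ _)
    · exact le_trans this.2 (le_max_left _ _)

lemma fold_sigWord (L : List (ℤ × ℤ)) (hL : ∀ p ∈ L, 0 ≤ p.1 ∧ 0 ≤ p.2) :
    ∀ c d : ℕ, (sigWord L).foldl sigStep (c, d) =
      (c + ((sigStats L).1.toNat - d), (d - (sigStats L).1.toNat) + (sigStats L).2.toNat) := by
  induction L with
  | nil => intro c d; simp [sigWord, sigStats]
  | cons p rest ih =>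
    intro c d
    have hp := hL p (by simp)
    have hrest : ∀ q ∈ rest, 0 ≤ q.1 ∧ 0 ≤ q.2 := fun q hq => hL q (by simp [hq])
    have hQ := sigStats_nonneg rest hrest
    simp only [sigWord, List.foldl_append]
    rw [fold_false, fold_true, ih hrest]
    simp only [sigStats, combineStats, Prod.mk.injEq]
    obtain ⟨hp1, hp2⟩ := hp
    obtain ⟨hQ1, hQ2⟩ := hQ
    constructor <;> omega

lemma reduced_shape (w : List Bool) (hred : ∀ l r : List Bool, w ≠ l ++ [true, false] ++ r) :
    ∃ a b : ℕ, w = List.replicate a false ++ List.replicate b true := by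
  induction w with
  | nil => exact ⟨0, 0, rfl⟩
  | cons x rest ih =>
    have hrest : ∀ l r : List Bool, rest ≠ l ++ [true, false] ++ r := by
      intro l r h
      exact hred (x :: l) r (by simp [h])
    obtain ⟨a, b, hab⟩ := ih hrest
    cases x with
    | false => exact ⟨a + 1, b, by simp [hab, List.replicate_succ]⟩
    | true =>
      cases a with
      | zero => exact ⟨0, b + 1, by simp [hab, List.replicate_succ]⟩
      | succ n =>
        exfalso
        exact hred [] (List.replicate n false ++ List.replicate b true)
          (by simp [hab, List.replicate_succ])

/-- signature rule: starting from the word of a tensor product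
`b = b_L ⊗ ⋯ ⊗ b₁` of seminormal crystals and successively deleting adjacent `+−` pairs,
any fully reduced result is independent of the order of deletions and equals
`−^{φ_i(b)} +^{ε_i(b)}`, with `φ_i(b)`, `ε_i(b)` given by the recursive tensor formulas. -/
theorem signature_rule (L : List (ℤ × ℤ)) (hL : ∀ p ∈ L, 0 ≤ p.1 ∧ 0 ≤ p.2)
    (w : List Bool) (hw : Relation.ReflTransGen DelStep (sigWord L) w)
    (hred : ∀ l r : List Bool, w ≠ l ++ [true, false] ++ r) :
    w = List.replicate (sigStats L).1.toNat false ++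
        List.replicate (sigStats L).2.toNat true := by
  obtain ⟨a, b, hab⟩ := reduced_shape w hred
  have h1 : (sigWord L).foldl sigStep (0, 0) = w.foldl sigStep (0, 0) := rtg_foldl hw _
  rw [fold_sigWord L hL 0 0] at h1
  rw [hab, List.foldl_append, fold_false, fold_true] at h1
  simp only [Nat.sub_zero, Nat.zero_sub, Nat.zero_add, Nat.add_zero] at h1
  obtain ⟨h2, h3⟩ := Prod.mk.injEq .. ▸ h1
  subst hab
  congr 1 <;> congr 1 <;> omega
end

section
/- Let σ_m : B(Λ) → B(mΛ) be a similarity map of highest weight crystals sending u_Λ to u_{mΛ}. Then for any Weyl group element w, σ_m restricts to a map from the Demazure crystal B_w(Λ) into B_w(mΛ), and its image consists exactly of those b ∈ B_w(mΛ) such that in the string decomposition e_{i₁}^{max} e_{i₂}^{max} ⋯ e_{i_ℓ}^{max} b = u_{mΛ} (for a fixed reduced word w = s_{i₁}⋯s_{i_ℓ}), each e_{i_j} is applied a number of times divisible by m. -/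
/-- Iterate of a partially-defined map (`none` representing `0`). -/
def optIter {B : Type*} (g : B → Option B) : ℕ → B → Option B
  | 0, b => some b
  | k+1, b => (g b).bind (optIter g k)

/-- A seminormal (regular) abstract `U_q(g)`-crystal with index set `I`, weight lattice `P`,
where `pair i μ = ⟨α_i^∨, μ⟩` and `α i` is the `i`-th simple root. -/
structure Crystal (I : Type*) (P : Type*) [AddCommGroup P]
    (pair : I → P → ℤ) (α : I → P) (B : Type*) where
  e : I → B → Option B
  f : I → B → Option B
  wt : B → P
  ε : I → B → ℕ
  φ : I → B → ℕ
  /-- `⟨α_i^∨, α_i⟩ = 2` -/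
  pair_alpha : ∀ i : I, pair i (α i) = 2
  /-- `f_i b = b'` iff `b = e_i b'` -/
  f_eq_iff : ∀ (i : I) (b b' : B), f i b = some b' ↔ e i b' = some b
  /-- `ε_i(b) = max { k : e_i^k b ≠ 0 }` -/
  eps_max : ∀ (i : I) (b : B) (k : ℕ), (optIter (e i) k b).isSome ↔ k ≤ ε i b
  /-- `φ_i(b) = max { k : f_i^k b ≠ 0 }` -/
  phi_max : ∀ (i : I) (b : B) (k : ℕ), (optIter (f i) k b).isSome ↔ k ≤ φ i b
  /-- `φ_i(b) = ε_i(b) + ⟨α_i^∨, wt(b)⟩` -/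
  phi_eps : ∀ (i : I) (b : B), (φ i b : ℤ) = (ε i b : ℤ) + pair i (wt b)
  /-- `wt(f_i b) = wt(b) − α_i` -/
  wt_f : ∀ (i : I) (b b' : B), f i b = some b' → wt b' = wt b - α i

/-- Membership in the Demazure crystal `B_w(Λ)`: `Dem C u l b` means
`e_{i₁}^{max} e_{i₂}^{max} ⋯ e_{iℓ}^{max} b = u` where the list `l` records the indices
in order of application (so `l` is the reversed reduced word of `w`), and
`e_i^{max} b = e_i^{ε_i(b)} b`. -/
inductive Dem {I P B : Type*} [AddCommGroup P] {pair : I → P → ℤ} {α : I → P}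
    (C : Crystal I P pair α B) (u : B) : List I → B → Prop
  | nil : Dem C u [] u
  | cons (i : I) (l : List I) (b b' : B) :
      optIter (C.e i) (C.ε i b) b = some b' → Dem C u l b' → Dem C u (i :: l) b

/-- Like `Dem`, but additionally requiring that at each step the operator `e_i` is applied
a number of times (namely `ε_i` of the current element) divisible by `m`. -/
inductive DemDiv {I P B : Type*} [AddCommGroup P] {pair : I → P → ℤ} {α : I → P}
    (C : Crystal I P pair α B) (u : B) (m : ℕ) : List I → B → Prop
  | nil : DemDiv C u m [] u
  | cons (i : I) (l : List I) (b b' : B) :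
      m ∣ C.ε i b → optIter (C.e i) (C.ε i b) b = some b' →
      DemDiv C u m l b' → DemDiv C u m (i :: l) b

lemma optIter_add {B : Type*} (g : B → Option B) (a b : ℕ) (x : B) :
    optIter g (a + b) x = (optIter g a x).bind (optIter g b) := by
  induction a generalizing x with
  | zero => simp [optIter]
  | succ n ih =>
    rw [show n + 1 + b = (n + b) + 1 from by omega]
    simp only [optIter]
    cases g x with
    | none => simp
    | some c => simp [ih]

lemma optIter_one {B : Type*} (g : B → Option B) (x : B) : optIter g 1 x = g x := by
  cases h : g x <;> simp [optIter, h]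

lemma optIter_mul {B B' : Type*} (g : B → Option B) (g' : B' → Option B') (σ : B → B')
    (m : ℕ) (hstep : ∀ b b', g b = some b' → optIter g' m (σ b) = some (σ b')) :
    ∀ (k : ℕ) (b b' : B), optIter g k b = some b' →
      optIter g' (m * k) (σ b) = some (σ b') := by
  intro k
  induction k with
  | zero => intro b b' h; simp only [optIter] at h; cases h; simp [optIter]
  | succ n ih =>
    intro b b' h
    simp only [optIter] at h
    cases hg : g b with
    | none => rw [hg] at h; simp at h
    | some c =>
      rw [hg] at h; simp only [Option.bind_some] at h
      rw [show m * (n + 1) = m + m * n from by ring, optIter_add,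
        hstep b c hg, Option.bind_some, ih c b' h]

lemma optIter_swap {B : Type*} (gf ge : B → Option B)
    (h : ∀ b b', gf b = some b' → ge b' = some b) :
    ∀ (k : ℕ) (b b' : B), optIter gf k b = some b' → optIter ge k b' = some b := by
  intro k
  induction k with
  | zero => intro b b' hh; simp only [optIter] at hh; cases hh; simp [optIter]
  | succ n ih =>
    intro b b' hh
    simp only [optIter] at hh
    cases hg : gf b with
    | none => rw [hg] at hh; simp at hh
    | some c =>
      rw [hg] at hh; simp only [Option.bind_some] at hh
      rw [show n + 1 = n + 1 from rfl, optIter_add, ih c b' hh, Option.bind_some,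
        optIter_one, h b c hg]

/-- a similarity map `σ_m : B(Λ) → B(mΛ)` with `σ(u_Λ) = u_{mΛ}` restricts to a
map `B_w(Λ) → B_w(mΛ)` whose image consists exactly of those `b ∈ B_w(mΛ)` such that, in the
string decomposition `e_{i₁}^{max} ⋯ e_{iℓ}^{max} b = u_{mΛ}` along the fixed reduced word,
each `e_{i_j}` is applied a number of times divisible by `m`. -/
theorem similarity_demazure {I P B B' : Type*} [AddCommGroup P]
    {pair : I → P → ℤ} {α : I → P}
    (C : Crystal I P pair α B) (C' : Crystal I P pair α B')
    (u : B) (hu : ∀ i, C.e i u = none)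
    (u' : B') (hu' : ∀ i, C'.e i u' = none)
    (m : ℕ) (hm : 0 < m) (σ : B → B') (hinj : Function.Injective σ) (hσu : σ u = u')
    (hε : ∀ i b, C'.ε i (σ b) = m * C.ε i b)
    (hφ : ∀ i b, C'.φ i (σ b) = m * C.φ i b)
    (hwt : ∀ b, C'.wt (σ b) = m • C.wt b)
    (he : ∀ i (b b' : B), C.e i b = some b' → optIter (C'.e i) m (σ b) = some (σ b'))
    (hf : ∀ i (b b' : B), C.f i b = some b' → optIter (C'.f i) m (σ b) = some (σ b'))
    (l : List I) :
    (∀ b : B, Dem C u l b → DemDiv C' u' m l (σ b)) ∧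
    (∀ b' : B', DemDiv C' u' m l b' → ∃ b : B, Dem C u l b ∧ σ b = b') := by
  constructor
  · intro b hb
    induction hb with
    | nil => rw [hσu]; exact DemDiv.nil
    | cons i l b b' hstep hdem ih =>
      refine DemDiv.cons i l (σ b) (σ b') ?_ ?_ ih
      · rw [hε]; exact Dvd.intro _ rfl
      · rw [hε]
        exact optIter_mul (C.e i) (C'.e i) σ m (he i) (C.ε i b) b b' hstep
  · intro b' hb'
    induction hb' with
    | nil => exact ⟨u, Dem.nil, hσu⟩
    | cons i l b' b'' hdvd hstep hdem ih =>
      obtain ⟨b₀, hd, hσb₀⟩ := ih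
      obtain ⟨k, hk⟩ := hdvd
      rw [hk] at hstep
      -- go back down with f's on the B' side
      have hfdown : optIter (C'.f i) (m * k) (σ b₀) = some b' := by
        rw [hσb₀]
        exact optIter_swap (C'.e i) (C'.f i)
          (fun x y hxy => (C'.f_eq_iff i y x).mpr hxy) (m * k) b' b'' hstep
      -- hence k ≤ φ_i(b₀)
      have hkle : k ≤ C.φ i b₀ := by
        have h1 : m * k ≤ C'.φ i (σ b₀) :=
          (C'.phi_max i (σ b₀) (m * k)).mp (by rw [hfdown]; rfl)
        rw [hφ] at h1
        exact Nat.le_of_mul_le_mul_left h1 hm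
      obtain ⟨b, hb⟩ : ∃ b, optIter (C.f i) k b₀ = some b := by
        have := (C.phi_max i b₀ k).mpr hkle
        exact Option.isSome_iff_exists.mp this
      have hfdown' : optIter (C'.f i) (m * k) (σ b₀) = some (σ b) :=
        optIter_mul (C.f i) (C'.f i) σ m (hf i) k b₀ b hb
      have hσb : σ b = b' := by
        rw [hfdown] at hfdown'
        exact (Option.some.injEq _ _ ▸ hfdown').symm
      have heup : optIter (C.e i) k b = some b₀ :=
        optIter_swap (C.f i) (C.e i)
          (fun x y hxy => (C.f_eq_iff i x y).mp hxy) k b₀ b hb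
      have hεb : C.ε i b = k := by
        have := hε i b
        rw [hσb, hk] at this
        exact Nat.eq_of_mul_eq_mul_left hm this.symm
      exact ⟨b, Dem.cons i l b b₀ (hεb ▸ heup) hd, hσb⟩
end
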